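/- arXiv:2210.02955 — 3 statements merged into one kernel-verified Lean document; each statement's English description precedes it below -/
import Mathlib

section
/- (Example 2.2, fractional growth/decay; also the key ODE step for the fractional diffusion Green function.) Let 0 < β < 1 and λ ∈ ℂ. The function y : [0,∞) → ℂ defined by y(t) = E_β(λ·t^β) = ∑_{k=0}^∞ λ^k·t^{βk}/Γ(β·k+1) satisfies y(0) = 1, y is differentiable on (0,∞), and for every t > 0 its Caputo fractional derivative of order β satisfies (1/Γ(1−β)) ∫_0^t (t−τ)^{−β} · y'(τ) dτ = λ · y(t). -/
open MeasureTheory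


lemma fact_lb (m : ℕ) : ∀ n, m ≤ n → (m+1)^(n-m) ≤ Nat.factorial n := by
  intro n hn
  induction n, hn using Nat.le_induction with
  | base => simp; exact Nat.factorial_pos m
  | succ n hn ih =>
    have h1 : n + 1 - m = (n - m) + 1 := by omega
    rw [h1, pow_succ]
    calc (m+1)^(n-m) * (m+1) ≤ Nat.factorial n * (n+1) :=
          Nat.mul_le_mul ih (by omega)
      _ = Nat.factorial (n+1) := by rw [Nat.factorial_succ]; ring

/-- Core summability: `∑ (k+1) r^k / Γ(βk+1)` converges. -/
lemma core_summable {β : ℝ} (hβ0 : 0 < β) {r : ℝ} (hr : 0 ≤ r) :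
    Summable (fun k : ℕ => ((k : ℝ) + 1) * r ^ k / Real.Gamma (β * k + 1)) := by
  obtain ⟨m, hm⟩ : ∃ m : ℕ, r + 1 ≤ ((m : ℝ) + 1) ^ β := by
    obtain ⟨m, hm⟩ := exists_nat_ge ((r+1) ^ (1/β))
    refine ⟨m, ?_⟩
    have h0 : (0:ℝ) ≤ (r+1) ^ (1/β) := Real.rpow_nonneg (by linarith) _
    calc r + 1 = ((r+1) ^ (1/β)) ^ β := by
          rw [← Real.rpow_mul (by linarith), one_div_mul_cancel hβ0.ne', Real.rpow_one]
      _ ≤ ((m:ℝ) + 1) ^ β := Real.rpow_le_rpow h0 (by linarith) hβ0.le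
  set M : ℝ := (m : ℝ) + 1 with hM
  have hm0 : (0:ℝ) ≤ (m:ℝ) := Nat.cast_nonneg m
  have hM1 : (1:ℝ) ≤ M := by rw [hM]; linarith
  have hMβ : r < M ^ β := lt_of_lt_of_le (by linarith) hm
  have hMβ0 : 0 < M ^ β := lt_of_le_of_lt hr hMβ
  have hq : ‖r / M ^ β‖ < 1 := by
    rw [Real.norm_eq_abs, abs_of_nonneg (by positivity)]
    rw [div_lt_one hMβ0]; exact hMβ
  have hsum : Summable (fun k : ℕ => M ^ ((m:ℝ)+1) * (((k:ℝ)+1) * (r / M ^ β) ^ k)) := by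
    apply Summable.mul_left
    have h1 := summable_pow_mul_geometric_of_norm_lt_one 1 hq
    have h2 := summable_geometric_of_norm_lt_one hq
    simpa [add_mul, one_mul, pow_one] using h1.add h2
  apply Summable.of_norm_bounded_eventually_nat hsum
  have hev : ∀ᶠ k : ℕ in Filter.atTop, ((m:ℝ) + 1) ≤ β * k := by
    rw [Filter.eventually_atTop]
    refine ⟨⌈((m:ℝ)+1)/β⌉₊, fun k hk => ?_⟩
    have h1 : ((m:ℝ)+1)/β ≤ (k:ℝ) := (Nat.ceil_le.mp (le_refl _)).trans (by exact_mod_cast hk)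
    rw [div_le_iff₀ hβ0] at h1
    linarith
  filter_upwards [hev] with k hk
  have hβk : (0:ℝ) < β * k := by linarith
  set n : ℕ := ⌊β * k⌋₊ with hn
  have hn1 : m + 1 ≤ n := Nat.le_floor (by push_cast; linarith)
  have hnle : (n : ℝ) ≤ β * k := Nat.floor_le hβk.le
  have hnlt : β * k < (n : ℝ) + 1 := Nat.lt_floor_add_one _
  have hgam : M ^ (β * k - ((m:ℝ)+1)) ≤ Real.Gamma (β * k + 1) := by
    have h2 : Real.Gamma ((n:ℝ) + 1) ≤ Real.Gamma (β * k + 1) := by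
      apply Real.Gamma_strictMonoOn_Ici.monotoneOn
      · simp only [Set.mem_Ici]
        have : (m:ℝ) + 1 ≤ (n:ℝ) := by exact_mod_cast hn1
        linarith
      · simp only [Set.mem_Ici]; linarith
      · linarith
    have h3 : Real.Gamma ((n:ℝ) + 1) = Nat.factorial n := Real.Gamma_nat_eq_factorial n
    have h4 : (((m+1)^(n-m) : ℕ) : ℝ) ≤ (Nat.factorial n : ℝ) := by
      exact_mod_cast fact_lb m n (by omega)
    have h4' : M ^ ((n - m : ℕ) : ℝ) ≤ (Nat.factorial n : ℝ) := by
      rw [Real.rpow_natCast]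
      calc M ^ (n-m) = (((m+1)^(n-m) : ℕ) : ℝ) := by push_cast [hM]; ring
        _ ≤ _ := h4
    have h5 : M ^ (β * k - ((m:ℝ)+1)) ≤ M ^ ((n - m : ℕ) : ℝ) := by
      apply Real.rpow_le_rpow_of_exponent_le hM1
      rw [Nat.cast_sub (by omega)]
      linarith
    calc M ^ (β * k - ((m:ℝ)+1)) ≤ (Nat.factorial n : ℝ) := h5.trans h4'
      _ = Real.Gamma ((n:ℝ) + 1) := h3.symm
      _ ≤ _ := h2
  rw [Real.norm_eq_abs]
  have hΓpos : 0 < Real.Gamma (β * k + 1) := Real.Gamma_pos_of_pos (by linarith)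
  have habs : |((k:ℝ)+1) * r ^ k / Real.Gamma (β * k + 1)|
      = ((k:ℝ)+1) * r ^ k / Real.Gamma (β * k + 1) := abs_of_nonneg (by positivity)
  rw [habs]
  have key : M ^ (β * k - ((m:ℝ)+1)) = (M ^ β) ^ k / M ^ ((m:ℝ)+1) := by
    rw [eq_div_iff (by positivity : (0:ℝ) < M ^ ((m:ℝ)+1)).ne', ← Real.rpow_natCast (M ^ β) k,
      ← Real.rpow_mul (by linarith), ← Real.rpow_add (by linarith : (0:ℝ) < M), mul_comm β (k:ℝ)]
    ring_nf
  have hfinal : ((k:ℝ)+1) * r ^ k / Real.Gamma (β * k + 1)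
      ≤ ((k:ℝ)+1) * r ^ k / ((M ^ β) ^ k / M ^ ((m:ℝ)+1)) := by
    apply div_le_div_of_nonneg_left (by positivity) (by rw [← key]; positivity)
    rw [← key]; exact hgam
  refine hfinal.trans (le_of_eq ?_)
  rw [div_pow]
  field_simp

noncomputable def mlTerm (β : ℝ) (lam : ℂ) (k : ℕ) (t : ℝ) : ℂ :=
  lam ^ k * ((t ^ (β * k) : ℝ) : ℂ) / ((Real.Gamma (β * k + 1) : ℝ) : ℂ)

noncomputable def mlTermD (β : ℝ) (lam : ℂ) (k : ℕ) (t : ℝ) : ℂ :=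
  lam ^ k * (((β * k) * t ^ (β * k - 1) : ℝ) : ℂ) / ((Real.Gamma (β * k + 1) : ℝ) : ℂ)


lemma gamma_pos {β : ℝ} (hβ0 : 0 < β) (k : ℕ) : 0 < Real.Gamma (β * k + 1) := by
  apply Real.Gamma_pos_of_pos
  have : (0:ℝ) ≤ β * k := by positivity
  linarith

lemma norm_mlTerm_le {β : ℝ} (hβ0 : 0 < β) (lam : ℂ) (k : ℕ) (t : ℝ) :
    ‖mlTerm β lam k t‖ ≤ (‖lam‖ * max 1 |t| ^ β) ^ k / Real.Gamma (β * k + 1) := by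
  have hΓ := gamma_pos hβ0 k
  rw [mlTerm, norm_div, norm_mul, norm_pow]
  rw [Complex.norm_real, Complex.norm_real, Real.norm_eq_abs, Real.norm_eq_abs,
    abs_of_pos hΓ]
  have h2 : max 1 |t| ^ (β * (k:ℝ)) = (max 1 |t| ^ β) ^ k := by
    rw [← Real.rpow_natCast (max 1 |t| ^ β) k, ← Real.rpow_mul (by positivity)]
  have h1 : |t ^ (β * k)| ≤ (max 1 |t| ^ β) ^ k := by
    rw [← h2]
    calc |t ^ (β * k)| ≤ |t| ^ (β * (k:ℝ)) := Real.abs_rpow_le_abs_rpow t _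
      _ ≤ max 1 |t| ^ (β * (k:ℝ)) :=
        Real.rpow_le_rpow (abs_nonneg t) (le_max_right _ _) (by positivity)
  rw [mul_pow]
  gcongr

lemma summable_mlTerm {β : ℝ} (hβ0 : 0 < β) (lam : ℂ) (t : ℝ) :
    Summable (fun k => mlTerm β lam k t) := by
  apply Summable.of_norm
  apply Summable.of_nonneg_of_le (fun k => norm_nonneg _) (fun k => ?_)
    (core_summable hβ0 (r := ‖lam‖ * max 1 |t| ^ β) (by positivity))
  refine (norm_mlTerm_le hβ0 lam k t).trans ?_
  have hΓ := gamma_pos hβ0 k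
  gcongr
  nlinarith [pow_nonneg (by positivity : (0:ℝ) ≤ ‖lam‖ * max 1 |t| ^ β) k,
    (Nat.cast_nonneg k : (0:ℝ) ≤ k)]

lemma hasDerivAt_mlTerm {β : ℝ} (lam : ℂ) (k : ℕ) {y : ℝ} (hy : 0 < y) :
    HasDerivAt (mlTerm β lam k) (mlTermD β lam k y) y := by
  have h := (Real.hasDerivAt_rpow_const (x := y) (p := β * k) (Or.inl hy.ne')).ofReal_comp
  have h2 := (h.const_mul (lam ^ k)).div_const ((Real.Gamma (β * k + 1) : ℝ) : ℂ)
  exact h2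

lemma norm_mlTermD_le {β : ℝ} (hβ0 : 0 < β) (lam : ℂ) (k : ℕ) {a b y : ℝ}
    (ha : 0 < a) (hy1 : a ≤ y) (hy2 : y ≤ b) :
    ‖mlTermD β lam k y‖ ≤
      (max β 1 / a) * (((k:ℝ)+1) * (‖lam‖ * max 1 b ^ β) ^ k / Real.Gamma (β * k + 1)) := by
  have hΓ := gamma_pos hβ0 k
  have hy0 : 0 < y := lt_of_lt_of_le ha hy1
  have hM1 : (1:ℝ) ≤ max 1 b := le_max_left _ _
  have hMb : y ≤ max 1 b := le_trans hy2 (le_max_right _ _)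
  have hMpow : max 1 b ^ (β * (k:ℝ)) = (max 1 b ^ β) ^ k := by
    rw [← Real.rpow_natCast (max 1 b ^ β) k, ← Real.rpow_mul (by positivity)]
  have e1 : y ^ (β * (k:ℝ) - 1) ≤ (max 1 b ^ β) ^ k / a := by
    rw [← hMpow, Real.rpow_sub hy0, Real.rpow_one]
    gcongr
  have e2 : β * (k:ℝ) ≤ max β 1 * ((k:ℝ) + 1) := by
    have h1 : β ≤ max β 1 := le_max_left _ _
    have h2 : (0:ℝ) ≤ (k:ℝ) := Nat.cast_nonneg k
    nlinarith
  have hnorm : ‖mlTermD β lam k y‖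
      = ‖lam‖ ^ k * (β * k * y ^ (β * (k:ℝ) - 1)) / Real.Gamma (β * k + 1) := by
    rw [mlTermD, norm_div, norm_mul, norm_pow, Complex.norm_real, Complex.norm_real,
      Real.norm_eq_abs, Real.norm_eq_abs, abs_of_pos hΓ, abs_of_nonneg (by positivity)]
  rw [hnorm]
  rw [div_le_iff₀ hΓ]
  have key : ‖lam‖ ^ k * (β * k * y ^ (β * (k:ℝ) - 1))
      ≤ ‖lam‖ ^ k * ((max β 1 * ((k:ℝ)+1)) * ((max 1 b ^ β) ^ k / a)) := by
    gcongr
  calc ‖lam‖ ^ k * (β * k * y ^ (β * (k:ℝ) - 1)) ≤ _ := key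
    _ = (max β 1 / a) * (((k:ℝ)+1) * (‖lam‖ ^ k * (max 1 b ^ β) ^ k)) := by
        field_simp
    _ = (max β 1 / a) * (((k:ℝ)+1) * (‖lam‖ * max 1 b ^ β) ^ k) := by rw [← mul_pow]
    _ = (max β 1 / a) * (((k:ℝ)+1) * (‖lam‖ * max 1 b ^ β) ^ k / Real.Gamma (β * k + 1))
        * Real.Gamma (β * k + 1) := by field_simp

lemma hasDerivAt_mlSum {β : ℝ} (hβ0 : 0 < β) (lam : ℂ) {t : ℝ} (ht : 0 < t) :
    HasDerivAt (fun τ => ∑' k, mlTerm β lam k τ) (∑' k, mlTermD β lam k t) t := by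
  have ha : (0:ℝ) < t/2 := by linarith
  have hmem : t ∈ Set.Ioo (t/2) (t+1) := ⟨by linarith, by linarith⟩
  have hu : Summable (fun k : ℕ =>
      (max β 1 / (t/2)) * (((k:ℝ)+1) * (‖lam‖ * max 1 (t+1) ^ β) ^ k / Real.Gamma (β * k + 1))) :=
    (core_summable hβ0 (by positivity)).mul_left _
  exact hasDerivAt_tsum_of_isPreconnected hu isOpen_Ioo isPreconnected_Ioo
    (fun k y hy => hasDerivAt_mlTerm lam k (lt_trans ha hy.1))
    (fun k y hy => norm_mlTermD_le hβ0 lam k ha hy.1.le hy.2.le)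
    hmem (summable_mlTerm hβ0 lam t) hmem

lemma betaInt_integrable {p q : ℝ} (hp : -1 < p) (hq : -1 < q) {t : ℝ} (ht : 0 < t) :
    IntervalIntegrable (fun τ => τ ^ p * (t - τ) ^ q) volume 0 t := by
  apply IntervalIntegrable.trans (b := t/2)
  · apply (intervalIntegral.intervalIntegrable_rpow' hp).mul_continuousOn
    apply ContinuousOn.rpow_const ((continuous_const.sub continuous_id).continuousOn)
    intro x hx
    left
    rw [Set.uIcc_of_le (by linarith : (0:ℝ) ≤ t/2)] at hx
    have := hx.2
    intro h0
    have : t - x = 0 → False := by intro h; linarith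
    exact this h0
  · have h1 : IntervalIntegrable (fun τ => (t - τ) ^ q) volume (t/2) t := by
      have := (intervalIntegral.intervalIntegrable_rpow' hq (a := 0) (b := t/2)).comp_sub_left t
      rw [show t - (0:ℝ) = t by ring, show t - t/2 = t/2 by ring] at this
      exact this.symm
    apply h1.continuousOn_mul
    apply ContinuousOn.rpow_const continuousOn_id
    intro x hx
    left
    rw [Set.uIcc_of_le (by linarith : t/2 ≤ t)] at hx
    have := hx.1
    simp only [id]
    intro h0
    rw [h0] at this; linarith

lemma beta_value {β : ℝ} (hβ0 : 0 < β) (hβ1 : β < 1) {c : ℝ} (hc : 0 < c) {t : ℝ} (ht : 0 < t) :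
    (∫ τ in (0:ℝ)..t, (((t - τ) ^ (-β) : ℝ) : ℂ) * ((τ ^ (c - 1) : ℝ) : ℂ))
      = ((t ^ (c - β) : ℝ) : ℂ) *
        ((Real.Gamma c * Real.Gamma (1 - β) / Real.Gamma (c + 1 - β) : ℝ) : ℂ) := by
  have h1 : (∫ τ in (0:ℝ)..t, (((t - τ) ^ (-β) : ℝ) : ℂ) * ((τ ^ (c - 1) : ℝ) : ℂ))
      = ∫ τ in (0:ℝ)..t, (τ:ℂ) ^ ((c:ℂ) - 1) * ((t:ℂ) - (τ:ℂ)) ^ (((1 - β : ℝ):ℂ) - 1) := by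
    apply intervalIntegral.integral_congr
    intro τ hτ
    rw [Set.uIcc_of_le ht.le] at hτ
    obtain ⟨hτ0, hτt⟩ := hτ
    show ((((t - τ) ^ (-β) : ℝ)) : ℂ) * ((τ ^ (c - 1) : ℝ) : ℂ)
        = (τ:ℂ) ^ ((c:ℂ) - 1) * ((t:ℂ) - (τ:ℂ)) ^ (((1 - β : ℝ):ℂ) - 1)
    rw [Complex.ofReal_cpow hτ0, Complex.ofReal_cpow (by linarith : (0:ℝ) ≤ t - τ)]
    rw [show ((c - 1 : ℝ) : ℂ) = (c:ℂ) - 1 by push_cast; ring,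
      show ((-β : ℝ) : ℂ) = ((1 - β : ℝ):ℂ) - 1 by push_cast; ring,
      Complex.ofReal_sub]
    ring
  rw [h1]
  have h2 := Complex.betaIntegral_scaled (c:ℂ) ((1 - β : ℝ):ℂ) ht
  rw [h2]
  have hre1 : 0 < Complex.re (c:ℂ) := by simpa using hc
  have hre2 : 0 < Complex.re ((1 - β : ℝ):ℂ) := by simpa using by linarith
  have h3 := Complex.Gamma_mul_Gamma_eq_betaIntegral hre1 hre2
  have hΓsum : Complex.Gamma ((c:ℂ) + ((1 - β : ℝ):ℂ)) = ((Real.Gamma (c + 1 - β) : ℝ) : ℂ) := by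
    rw [show (c:ℂ) + ((1 - β : ℝ):ℂ) = ((c + 1 - β : ℝ) : ℂ) by push_cast; ring,
      Complex.Gamma_ofReal]
  have hΓsum_ne : Complex.Gamma ((c:ℂ) + ((1 - β : ℝ):ℂ)) ≠ 0 := by
    rw [hΓsum]
    exact_mod_cast (Real.Gamma_pos_of_pos (by linarith)).ne'
  have hbeta : Complex.betaIntegral (c:ℂ) ((1 - β : ℝ):ℂ)
      = Complex.Gamma (c:ℂ) * Complex.Gamma ((1 - β : ℝ):ℂ) /
        Complex.Gamma ((c:ℂ) + ((1 - β : ℝ):ℂ)) := by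
    rw [eq_div_iff hΓsum_ne, h3]; ring
  rw [hbeta, hΓsum, Complex.Gamma_ofReal, Complex.Gamma_ofReal]
  have hcpow : (t:ℂ) ^ ((c:ℂ) + ((1 - β : ℝ):ℂ) - 1) = ((t ^ (c - β) : ℝ) : ℂ) := by
    rw [show (c:ℂ) + ((1 - β : ℝ):ℂ) - 1 = ((c - β : ℝ) : ℂ) by push_cast; ring,
      ← Complex.ofReal_cpow ht.le]
  rw [hcpow]
  push_cast
  ring

lemma mlTermD_zero (β : ℝ) (lam : ℂ) (τ : ℝ) : mlTermD β lam 0 τ = 0 := by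
  simp [mlTermD]

lemma caputo_step {β : ℝ} (hβ0 : 0 < β) (hβ1 : β < 1) (lam : ℂ) {t : ℝ} (ht : 0 < t) (k : ℕ) :
    ((1 / Real.Gamma (1 - β) : ℝ) : ℂ) *
      ∫ τ in (0:ℝ)..t, (((t - τ) ^ (-β) : ℝ) : ℂ) * mlTermD β lam (k+1) τ
    = lam * mlTerm β lam k t := by
  set c : ℝ := β * (k+1 : ℕ) with hc
  have hc0 : 0 < c := by rw [hc]; positivity
  have hfun : (fun τ : ℝ => (((t - τ) ^ (-β) : ℝ) : ℂ) * mlTermD β lam (k+1) τ)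
      = fun τ : ℝ => (lam ^ (k+1) * (c : ℂ) / ((Real.Gamma (c + 1) : ℝ) : ℂ)) *
          ((((t - τ) ^ (-β) : ℝ) : ℂ) * ((τ ^ (c - 1) : ℝ) : ℂ)) := by
    funext τ
    rw [mlTermD, ← hc]
    push_cast
    ring
  rw [hfun, intervalIntegral.integral_const_mul, beta_value hβ0 hβ1 hc0 ht]
  -- algebra
  have hΓc : (0:ℝ) < Real.Gamma c := Real.Gamma_pos_of_pos hc0
  have hΓc1 : Real.Gamma (c + 1) = c * Real.Gamma c := Real.Gamma_add_one hc0.ne'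
  have hΓβ : (0:ℝ) < Real.Gamma (1 - β) := Real.Gamma_pos_of_pos (by linarith)
  have hΓk : (0:ℝ) < Real.Gamma (β * k + 1) := gamma_pos hβ0 k
  have he1 : c - β = β * k := by rw [hc]; push_cast; ring
  have he2 : c + 1 - β = β * k + 1 := by rw [hc]; push_cast; ring
  rw [he1, he2, hΓc1, mlTerm]
  have hΓc' : ((Real.Gamma c : ℝ) : ℂ) ≠ 0 := by exact_mod_cast hΓc.ne'
  have hΓβ' : ((Real.Gamma (1 - β) : ℝ) : ℂ) ≠ 0 := by exact_mod_cast hΓβ.ne'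
  have hΓk' : ((Real.Gamma (β * k + 1) : ℝ) : ℂ) ≠ 0 := by exact_mod_cast hΓk.ne'
  have hcC : (c : ℂ) ≠ 0 := by exact_mod_cast hc0.ne'
  push_cast
  rw [pow_succ]
  field_simp

lemma integrable_G {β : ℝ} (hβ0 : 0 < β) (hβ1 : β < 1) (lam : ℂ) {t : ℝ} (ht : 0 < t) (k : ℕ) :
    Integrable (fun τ => (((t - τ) ^ (-β) : ℝ) : ℂ) * mlTermD β lam k τ)
      (MeasureTheory.volume.restrict (Set.Ioc 0 t)) := by
  match k with
  | 0 =>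
    have : (fun τ => (((t - τ) ^ (-β) : ℝ) : ℂ) * mlTermD β lam 0 τ) = fun _ => (0:ℂ) := by
      funext τ; rw [mlTermD_zero]; ring
    rw [this]; exact integrable_zero _ _ _
  | (k+1) =>
    set c : ℝ := β * (k+1 : ℕ) with hc
    have hc0 : 0 < c := by rw [hc]; positivity
    have hI : IntervalIntegrable (fun τ => τ ^ (c - 1) * (t - τ) ^ (-β)) volume 0 t :=
      betaInt_integrable (by linarith) (by linarith) ht
    have hI2 : IntegrableOn (fun τ => τ ^ (c - 1) * (t - τ) ^ (-β)) (Set.Ioc 0 t) volume :=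
      (intervalIntegrable_iff_integrableOn_Ioc_of_le ht.le).mp hI
    have hI3 := (hI2.ofReal (𝕜 := ℂ)).const_mul (lam ^ (k+1) * (c : ℂ) / ((Real.Gamma (c + 1) : ℝ) : ℂ))
    apply hI3.congr
    apply Filter.Eventually.of_forall
    intro τ
    simp only [mlTermD, ← hc]
    push_cast
    ring_nf
    exact mul_right_comm _ _ _

lemma summable_norm_integral_G {β : ℝ} (hβ0 : 0 < β) (hβ1 : β < 1) (lam : ℂ) {t : ℝ} (ht : 0 < t) :
    Summable (fun k : ℕ => ∫ τ in Set.Ioc (0:ℝ) t,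
      ‖(((t - τ) ^ (-β) : ℝ) : ℂ) * mlTermD β lam k τ‖) := by
  set C0 : ℝ := ∫ τ in Set.Ioc (0:ℝ) t, (t - τ) ^ (-β) with hC0
  have hC0nn : 0 ≤ C0 := setIntegral_nonneg measurableSet_Ioc
    (fun τ hτ => Real.rpow_nonneg (by simp only [Set.mem_Ioc] at hτ; linarith [hτ.2]) _)
  have hC0int : IntegrableOn (fun τ => (t - τ) ^ (-β)) (Set.Ioc 0 t) volume := by
    have h0 : IntervalIntegrable (fun τ => τ ^ (0:ℝ) * (t - τ) ^ (-β)) volume 0 t :=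
      betaInt_integrable (by norm_num) (by linarith) ht
    have he : (fun τ : ℝ => τ ^ (0:ℝ) * (t - τ) ^ (-β)) = fun τ => (t - τ) ^ (-β) := by
      funext τ; rw [Real.rpow_zero, one_mul]
    rw [he] at h0
    exact (intervalIntegrable_iff_integrableOn_Ioc_of_le ht.le).mp h0
  set r : ℝ := ‖lam‖ * t ^ β with hr
  have hrnn : 0 ≤ r := by positivity
  apply Summable.of_norm_bounded_eventually_nat (g := fun k : ℕ => (max β 1 * C0 / t) * (((k:ℝ)+1) * r ^ k / Real.Gamma (β * k + 1)))
    ((core_summable hβ0 hrnn).mul_left _)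
  rw [Filter.eventually_atTop]
  refine ⟨⌈1/β⌉₊, fun k hk => ?_⟩
  have hβk1 : 1 ≤ β * k := by
    have h1 : 1/β ≤ (k:ℝ) := (Nat.le_ceil _).trans (by exact_mod_cast hk)
    rw [div_le_iff₀ hβ0] at h1
    linarith [mul_comm β (k:ℝ)]
  have hΓ := gamma_pos hβ0 k
  -- the integral is nonneg
  have hnn : 0 ≤ ∫ τ in Set.Ioc (0:ℝ) t, ‖(((t - τ) ^ (-β) : ℝ) : ℂ) * mlTermD β lam k τ‖ :=
    setIntegral_nonneg measurableSet_Ioc (fun τ _ => norm_nonneg _)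
  rw [Real.norm_eq_abs, abs_of_nonneg hnn]
  set D : ℝ := β * k * t ^ (β * k - 1) * ‖lam‖ ^ k / Real.Gamma (β * k + 1) with hD
  have hDnn : 0 ≤ D := by
    rw [hD]; positivity
  have hbound : ∫ τ in Set.Ioc (0:ℝ) t, ‖(((t - τ) ^ (-β) : ℝ) : ℂ) * mlTermD β lam k τ‖
      ≤ ∫ τ in Set.Ioc (0:ℝ) t, D * (t - τ) ^ (-β) := by
    apply setIntegral_mono_on ((integrable_G hβ0 hβ1 lam ht k).norm) (hC0int.const_mul D)
      measurableSet_Ioc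
    intro τ hτ
    simp only [Set.mem_Ioc] at hτ
    have hτ0 : 0 < τ := hτ.1
    have httτ : 0 ≤ t - τ := by linarith [hτ.2]
    have hrw : ‖(((t - τ) ^ (-β) : ℝ) : ℂ) * mlTermD β lam k τ‖
        = (β * k * τ ^ (β * k - 1) * ‖lam‖ ^ k / Real.Gamma (β * k + 1)) * (t - τ) ^ (-β) := by
      rw [norm_mul, mlTermD, norm_div, norm_mul, norm_pow, Complex.norm_real, Complex.norm_real,
        Complex.norm_real, Real.norm_eq_abs, Real.norm_eq_abs, Real.norm_eq_abs,
        abs_of_pos hΓ, abs_of_nonneg (Real.rpow_nonneg httτ _),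
        abs_of_nonneg (by positivity : (0:ℝ) ≤ β * k * τ ^ (β * k - 1))]
      ring
    rw [hrw]
    have hmono : τ ^ (β * k - 1) ≤ t ^ (β * k - 1) :=
      Real.rpow_le_rpow hτ0.le hτ.2 (by linarith)
    rw [hD]
    gcongr
  rw [integral_const_mul] at hbound  -- ∫ D * f = D * ∫ f ?
  refine hbound.trans ?_
  rw [← hC0]
  -- now: D * C0 ≤ (max β 1 * C0 / t) * ((k+1) * r^k / Γ)
  have hpow : t ^ (β * (k:ℝ) - 1) = (t ^ β) ^ k / t := by
    rw [Real.rpow_sub ht, Real.rpow_one, ← Real.rpow_natCast (t ^ β) k,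
      ← Real.rpow_mul ht.le, mul_comm β (k:ℝ)]
  have he2 : β * (k:ℝ) ≤ max β 1 * ((k:ℝ) + 1) := by
    have h1 : β ≤ max β 1 := le_max_left _ _
    have h2 : (0:ℝ) ≤ (k:ℝ) := Nat.cast_nonneg k
    nlinarith
  rw [hD, hpow, hr, mul_pow]
  set P : ℝ := (t ^ β) ^ k * ‖lam‖ ^ k * C0 / (t * Real.Gamma (β * k + 1)) with hP
  have hPnn : 0 ≤ P := by rw [hP]; positivity
  calc β * ↑k * ((t ^ β) ^ k / t) * ‖lam‖ ^ k / Real.Gamma (β * ↑k + 1) * C0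
      = β * ↑k * P := by rw [hP]; field_simp
    _ ≤ ((max β 1) * ((k:ℝ) + 1)) * P := mul_le_mul_of_nonneg_right he2 hPnn
    _ = (max β 1) * C0 / t * (((k:ℝ) + 1) * (‖lam‖ ^ k * (t ^ β) ^ k) / Real.Gamma (β * ↑k + 1)) := by
        rw [hP]; field_simp

lemma caputo_main {β : ℝ} (hβ0 : 0 < β) (hβ1 : β < 1) (lam : ℂ) {t : ℝ} (ht : 0 < t)
    (f : ℝ → ℂ) (hf : ∀ τ ∈ Set.Ioc (0:ℝ) t, f τ = ∑' k, mlTermD β lam k τ) :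
    ((1 / Real.Gamma (1 - β) : ℝ) : ℂ) * ∫ τ in (0:ℝ)..t, (((t - τ) ^ (-β) : ℝ) : ℂ) * f τ
      = lam * ∑' k, mlTerm β lam k t := by
  have hInt := integrable_G hβ0 hβ1 lam ht
  have hSum := summable_norm_integral_G hβ0 hβ1 lam ht
  have hswap := integral_tsum_of_summable_integral_norm
      (μ := MeasureTheory.volume.restrict (Set.Ioc (0:ℝ) t))
      (F := fun k τ => (((t - τ) ^ (-β) : ℝ) : ℂ) * mlTermD β lam k τ) hInt hSum
  have hsummable : Summable (fun k : ℕ =>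
      ∫ τ in Set.Ioc (0:ℝ) t, (((t - τ) ^ (-β) : ℝ) : ℂ) * mlTermD β lam k τ) :=
    (hasSum_integral_of_summable_integral_norm hInt hSum).summable
  rw [intervalIntegral.integral_of_le ht.le]
  rw [setIntegral_congr_fun (g := fun τ =>
      ∑' k, (((t - τ) ^ (-β) : ℝ) : ℂ) * mlTermD β lam k τ) measurableSet_Ioc
      (fun τ hτ => by dsimp only; rw [hf τ hτ, tsum_mul_left])]
  rw [← hswap]
  rw [← tsum_mul_left]
  rw [Summable.tsum_eq_zero_add (hsummable.mul_left _)]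
  have h0 : ((1 / Real.Gamma (1 - β) : ℝ) : ℂ) *
      ∫ τ in Set.Ioc (0:ℝ) t, (((t - τ) ^ (-β) : ℝ) : ℂ) * mlTermD β lam 0 τ = 0 := by
    simp [mlTermD_zero]
  rw [h0, zero_add]
  have hstep : ∀ k : ℕ, ((1 / Real.Gamma (1 - β) : ℝ) : ℂ) *
      ∫ τ in Set.Ioc (0:ℝ) t, (((t - τ) ^ (-β) : ℝ) : ℂ) * mlTermD β lam (k+1) τ
      = lam * mlTerm β lam k t := by
    intro k
    rw [← intervalIntegral.integral_of_le ht.le]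
    exact caputo_step hβ0 hβ1 lam ht k
  rw [tsum_congr hstep, tsum_mul_left]

/-- Complex-valued Mittag-Leffler function `t ↦ E_β (λ t^β)`. -/
noncomputable def mlFun (β : ℝ) (lam : ℂ) (t : ℝ) : ℂ :=
  ∑' k : ℕ, lam ^ k * ((t ^ (β * k) : ℝ) : ℂ) / ((Real.Gamma (β * k + 1) : ℝ) : ℂ)

theorem fractional_growth_decay (β : ℝ) (hβ0 : 0 < β) (hβ1 : β < 1) (lam : ℂ) :
    mlFun β lam 0 = 1 ∧
    DifferentiableOn ℝ (mlFun β lam) (Set.Ioi 0) ∧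
    ∀ t > (0 : ℝ),
      ((1 / Real.Gamma (1 - β) : ℝ) : ℂ) *
          ∫ τ in (0 : ℝ)..t, (((t - τ) ^ (-β) : ℝ) : ℂ) * deriv (mlFun β lam) τ
        = lam * mlFun β lam t := by
  have hml : mlFun β lam = fun t => ∑' k, mlTerm β lam k t := rfl
  refine ⟨?_, ?_, ?_⟩
  · rw [hml]
    show (∑' k, mlTerm β lam k 0) = 1
    rw [tsum_eq_single 0 (fun k hk => ?_)]
    · simp [mlTerm, Real.Gamma_one]
    · have hk0 : (0:ℝ) < β * k := by
        have : (0:ℝ) < (k:ℝ) := by exact_mod_cast Nat.pos_of_ne_zero hk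
        positivity
      simp [mlTerm, Real.zero_rpow hk0.ne']
  · intro x hx
    exact ((hasDerivAt_mlSum hβ0 lam hx).differentiableAt).differentiableWithinAt
  · intro t ht
    have hf : ∀ τ ∈ Set.Ioc (0:ℝ) t, deriv (mlFun β lam) τ = ∑' k, mlTermD β lam k τ :=
      fun τ hτ => (hasDerivAt_mlSum hβ0 lam hτ.1).deriv
    exact caputo_main hβ0 hβ1 lam ht _ hf
end

section
/- (Example 2.3.) Let 0 < β < 1 and define the fractional cosine cos_β(t) = ∑_{n=0}^∞ (−1)^n · t^{2nβ}/Γ(2nβ+1) and the fractional sine sin_β(t) = ∑_{n=0}^∞ (−1)^n · t^{(2n+1)β}/Γ((2n+1)β+1) for t ≥ 0. Then cos_β is differentiable on (0,∞) and for every t > 0 its Caputo fractional derivative of order β satisfies (1/Γ(1−β)) ∫_0^t (t−τ)^{−β} · cos_β'(τ) dτ = −sin_β(t). -/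
open MeasureTheory

/-- Fractional cosine `cos_β`. -/
noncomputable def fracCos (β t : ℝ) : ℝ :=
  ∑' n : ℕ, (-1 : ℝ) ^ n * t ^ (2 * n * β) / Real.Gamma (2 * n * β + 1)

/-- Fractional sine `sin_β`. -/
noncomputable def fracSin (β t : ℝ) : ℝ :=
  ∑' n : ℕ, (-1 : ℝ) ^ n * t ^ ((2 * n + 1) * β) / Real.Gamma ((2 * n + 1) * β + 1)

namespace CaputoAux

set_option linter.deprecated false
set_option linter.unusedVariables false

lemma gamma_mono {x y : ℝ} (hx : 2 ≤ x) (hxy : x ≤ y) : Real.Gamma x ≤ Real.Gamma y :=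
  Real.Gamma_strictMonoOn_Ici.monotoneOn hx (le_trans hx hxy) hxy

lemma gamma_ge_pow {x : ℝ} (hx : 2 ≤ x) (j : ℕ) : x ^ j ≤ Real.Gamma (x + j) := by
  induction j with
  | zero =>
      simpa using (Real.Gamma_two ▸ gamma_mono (le_refl 2) hx)
  | succ j ih =>
      have hxj : (0:ℝ) < x + j := by positivity
      have h1 : Real.Gamma (x + ((j:ℕ)+1:ℕ)) = (x + j) * Real.Gamma (x + j) := by
        rw [show (x + (((j:ℕ)+1:ℕ):ℝ) : ℝ) = (x + j) + 1 by push_cast; ring,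
          Real.Gamma_add_one hxj.ne']
      have hpow : (0:ℝ) ≤ x ^ j := by positivity
      rw [h1]
      calc x ^ (j+1) = x * x ^ j := by ring
        _ ≤ (x + j) * Real.Gamma (x + j) := by
            apply mul_le_mul (by linarith [Nat.cast_nonneg (α := ℝ) j]) ih hpow (by linarith)

lemma eventually_geom_le_gamma (c d R : ℝ) (hc : 0 < c) (hd : 0 < d) (hR : 1 ≤ R) :
    ∀ᶠ n : ℕ in Filter.atTop, R ^ n ≤ Real.Gamma (c * n + d) := by
  set M : ℕ := ⌈R ^ (2 / c)⌉₊ + 2 with hM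
  have hM2 : (2:ℝ) ≤ (M:ℝ) := by
    have : (0:ℝ) ≤ (⌈R ^ (2 / c)⌉₊ : ℝ) := Nat.cast_nonneg _
    push_cast [hM]; linarith
  have hMR : R ^ (2/c) ≤ (M:ℝ) := by
    have := Nat.le_ceil (R ^ (2/c))
    push_cast [hM]; linarith
  filter_upwards [Filter.eventually_ge_atTop ⌈2*((M:ℝ)+d+1)/c⌉₊] with n hn
  have hn' : (⌈2*((M:ℝ)+d+1)/c⌉₊ : ℝ) ≤ (n:ℝ) := by exact_mod_cast hn
  have hcn : 2*((M:ℝ)+d+1) ≤ c*n := by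
    have h1 : 2*((M:ℝ)+d+1)/c ≤ (n:ℝ) := le_trans (Nat.le_ceil _) hn'
    calc 2*((M:ℝ)+d+1) = (2*((M:ℝ)+d+1)/c) * c := by field_simp
      _ ≤ (n:ℝ) * c := by exact mul_le_mul_of_nonneg_right h1 hc.le
      _ = c * n := by ring
  set j : ℕ := ⌈c * n / 2⌉₊ with hj
  have hcn0 : (0:ℝ) ≤ c * n / 2 := by positivity
  have hj1 : c*n/2 ≤ (j:ℝ) := Nat.le_ceil _
  have hj2 : (j:ℝ) ≤ c*n/2 + 1 := (Nat.ceil_lt_add_one hcn0).le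
  have key1 : (M:ℝ) + j ≤ c*n + d := by linarith
  have hR0 : (0:ℝ) ≤ R := by linarith
  calc R ^ n = R ^ (n:ℝ) := (Real.rpow_natCast R n).symm
    _ = (R ^ (2/c)) ^ (c*n/2 : ℝ) := by
        rw [← Real.rpow_mul hR0]
        congr 1
        field_simp
    _ ≤ (M:ℝ) ^ (c*n/2 : ℝ) := by
        apply Real.rpow_le_rpow (Real.rpow_nonneg hR0 _) hMR hcn0
    _ ≤ (M:ℝ) ^ (j:ℝ) := Real.rpow_le_rpow_of_exponent_le (by linarith) hj1
    _ = (M:ℝ) ^ j := Real.rpow_natCast _ _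
    _ ≤ Real.Gamma ((M:ℝ) + j) := gamma_ge_pow hM2 j
    _ ≤ Real.Gamma (c * n + d) := gamma_mono (by linarith [Nat.cast_nonneg (α := ℝ) j]) key1

lemma summable_pow_div_Gamma {r c d : ℝ} (hr : 0 ≤ r) (hc : 0 < c) (hd : 0 < d) :
    Summable fun n : ℕ => r ^ n / Real.Gamma (c * n + d) := by
  set R : ℝ := 2 * r + 2 with hRdef
  have hR1 : (1:ℝ) ≤ R := by simp [hRdef]; linarith
  have hR0 : (0:ℝ) < R := by linarith
  obtain ⟨N, hN⟩ := Filter.eventually_atTop.mp (eventually_geom_le_gamma c d R hc hd hR1)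
  rw [← summable_nat_add_iff N]
  have hq0 : (0:ℝ) ≤ r / R := by positivity
  have hq1 : r / R < 1 := by
    rw [div_lt_one hR0]; linarith
  apply Summable.of_nonneg_of_le (g := fun n => r ^ (n + N) / Real.Gamma (c * ((n + N : ℕ):ℝ) + d))
    (f := fun n => (r/R) ^ (n + N))
  · intro n
    have hΓ : 0 < Real.Gamma (c * (n + N) + d) := Real.Gamma_pos_of_pos (by positivity)
    positivity
  · intro n
    have hΓ : R ^ (n + N) ≤ Real.Gamma (c * ((n + N : ℕ):ℝ) + d) := hN (n + N) (by omega)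
    have hRp : (0:ℝ) < R ^ (n + N) := by positivity
    calc r ^ (n + N) / Real.Gamma (c * ((n + N : ℕ):ℝ) + d)
        ≤ r ^ (n + N) / R ^ (n + N) := by
          apply div_le_div_of_nonneg_left (by positivity) hRp hΓ
      _ = (r / R) ^ (n + N) := by rw [div_pow]
  · simp_rw [pow_add]
    exact (summable_geometric_of_lt_one hq0 hq1).mul_right _

lemma summable_nat_mul_pow_div_Gamma {r c d : ℝ} (hr : 0 ≤ r) (hc : 0 < c) (hd : 0 < d) :
    Summable fun n : ℕ => (n:ℝ) * r ^ n / Real.Gamma (c * n + d) := by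
  apply Summable.of_nonneg_of_le (f := fun n : ℕ => (2*(r+1)) ^ n / Real.Gamma (c * n + d))
  · intro n
    have hΓ : 0 < Real.Gamma (c * n + d) := Real.Gamma_pos_of_pos (by positivity)
    positivity
  · intro n
    have hΓ : 0 < Real.Gamma (c * n + d) := Real.Gamma_pos_of_pos (by positivity)
    have hnum : (n:ℝ) * r ^ n ≤ (2*(r+1)) ^ n := by
      calc (n:ℝ) * r ^ n ≤ 2 ^ n * (r+1) ^ n := by
            apply mul_le_mul ?_ (pow_le_pow_left₀ hr (by linarith) n) (by positivity) (by positivity)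
            · exact_mod_cast (Nat.lt_two_pow_self (n := n)).le
        _ = (2*(r+1)) ^ n := by rw [mul_pow]
    gcongr
  · exact summable_pow_div_Gamma (by linarith) hc hd


lemma betaIntegrable {p q t : ℝ} (hp : 0 < p) (hq : 0 < q) (ht : 0 < t) :
    IntervalIntegrable (fun x => x ^ (p-1) * (t-x) ^ (q-1)) volume 0 t := by
  have ht2 : 0 < t/2 := by linarith
  have J1 : IntervalIntegrable (fun x : ℝ => x ^ (p-1)) volume 0 (t/2) :=
    intervalIntegral.intervalIntegrable_rpow' (by linarith)
  have hcont1 : ContinuousOn (fun x : ℝ => (t-x) ^ (q-1)) (Set.uIcc 0 (t/2)) := by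
    apply ContinuousOn.rpow_const (by fun_prop)
    intro x hx
    rw [Set.uIcc_of_le ht2.le] at hx
    left
    have := hx.2
    intro h0
    have : x = t := by linarith [sub_eq_zero.mp h0]
    linarith [hx.2]
  have J1' := J1.mul_continuousOn hcont1
  have J2 : IntervalIntegrable (fun x : ℝ => (t-x) ^ (q-1)) volume (t/2) t := by
    have base : IntervalIntegrable (fun x : ℝ => x ^ (q-1)) volume 0 (t/2) :=
      intervalIntegral.intervalIntegrable_rpow' (by linarith)
    have h := (base.comp_sub_left t).symm
    rw [show t - t/2 = t/2 by ring, sub_zero] at h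
    exact h
  have hcont2 : ContinuousOn (fun x : ℝ => x ^ (p-1)) (Set.uIcc (t/2) t) := by
    apply ContinuousOn.rpow_const (by fun_prop)
    intro x hx
    rw [Set.uIcc_of_le (by linarith)] at hx
    exact Or.inl (ne_of_gt (lt_of_lt_of_le (by linarith) hx.1))
  have J2' := J2.continuousOn_mul hcont2
  exact J1'.trans J2'

lemma betaValue {p q t : ℝ} (hp : 0 < p) (hq : 0 < q) (ht : 0 < t) :
    ∫ x in (0:ℝ)..t, x ^ (p-1) * (t-x) ^ (q-1)
      = t ^ (p+q-1) * (Real.Gamma p * Real.Gamma q / Real.Gamma (p+q)) := by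
  have hC : ∫ x in (0:ℝ)..t, (x:ℂ) ^ ((p:ℂ) - 1) * ((t:ℂ) - (x:ℂ)) ^ ((q:ℂ) - 1)
      = (t:ℂ) ^ ((p:ℂ) + q - 1) * Complex.betaIntegral p q :=
    Complex.betaIntegral_scaled p q ht
  have hBeta : Complex.betaIntegral p q
      = (Real.Gamma p * Real.Gamma q / Real.Gamma (p+q) : ℝ) := by
    have h1 := Complex.Gamma_mul_Gamma_eq_betaIntegral
      (s := (p:ℂ)) (t := (q:ℂ)) (by simpa using hp) (by simpa using hq)
    have h2' : ((Real.Gamma (p+q) : ℝ) : ℂ) ≠ 0 :=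
      Complex.ofReal_ne_zero.mpr (Real.Gamma_pos_of_pos (by positivity)).ne'
    rw [show ((p:ℂ) + q) = ((p + q : ℝ) : ℂ) by push_cast; ring] at h1
    rw [Complex.Gamma_ofReal, Complex.Gamma_ofReal, Complex.Gamma_ofReal] at h1
    rw [Complex.ofReal_div, Complex.ofReal_mul, eq_div_iff h2']
    linear_combination -h1
  have hcast : ∫ x in (0:ℝ)..t, (x:ℂ) ^ ((p:ℂ) - 1) * ((t:ℂ) - (x:ℂ)) ^ ((q:ℂ) - 1)
      = ((∫ x in (0:ℝ)..t, x ^ (p-1) * (t-x) ^ (q-1) : ℝ) : ℂ) := by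
    rw [← intervalIntegral.integral_ofReal]
    apply intervalIntegral.integral_congr
    intro x hx
    rw [Set.uIcc_of_le ht.le] at hx
    simp only
    rw [Complex.ofReal_mul, Complex.ofReal_cpow hx.1,
      Complex.ofReal_cpow (by linarith [hx.2] : (0:ℝ) ≤ t - x)]
    push_cast
    ring
  apply Complex.ofReal_inj.mp
  rw [← hcast, hC, hBeta, Complex.ofReal_mul, Complex.ofReal_cpow ht.le]
  push_cast
  ring

/-- Core integral over `Ioc`: integrability and value. -/
lemma coreIntegrable {β p t : ℝ} (hβ0 : 0 < β) (hβ1 : β < 1) (hp : 0 < p) (ht : 0 < t) :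
    IntegrableOn (fun τ => (t-τ) ^ (-β) * τ ^ (p-1)) (Set.Ioc 0 t) volume := by
  have h := betaIntegrable hp (q := 1 - β) (by linarith) ht
  rw [show (1:ℝ) - β - 1 = -β by ring] at h
  rw [intervalIntegrable_iff_integrableOn_Ioc_of_le ht.le] at h
  exact h.congr_fun (fun x _ => by ring) measurableSet_Ioc

lemma coreValue {β p t : ℝ} (hβ0 : 0 < β) (hβ1 : β < 1) (hp : 0 < p) (ht : 0 < t) :
    ∫ τ in Set.Ioc 0 t, (t-τ) ^ (-β) * τ ^ (p-1)
      = t ^ (p-β) * (Real.Gamma p * Real.Gamma (1-β) / Real.Gamma (p+(1-β))) := by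
  have h := betaValue hp (q := 1 - β) (by linarith) ht
  rw [show (1:ℝ) - β - 1 = -β by ring, show p + (1-β) - 1 = p - β by ring,
    intervalIntegral.integral_of_le ht.le] at h
  rw [← h]
  exact setIntegral_congr_fun measurableSet_Ioc (fun x _ => by ring)


/-- The `n`-th summand of `fracCos`. -/
noncomputable def cosTerm (β : ℝ) (n : ℕ) (τ : ℝ) : ℝ :=
  (-1 : ℝ) ^ n * τ ^ (2 * n * β) / Real.Gamma (2 * n * β + 1)

/-- Pointwise derivative of `cosTerm`. -/
noncomputable def cosDeriv (β : ℝ) (n : ℕ) (τ : ℝ) : ℝ :=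
  (-1 : ℝ) ^ n * (2 * n * β) * τ ^ (2 * n * β - 1) / Real.Gamma (2 * n * β + 1)

lemma fracCos_eq (β t : ℝ) : fracCos β t = ∑' n, cosTerm β n t := rfl

lemma gammaArg_pos {β : ℝ} (hβ0 : 0 < β) (n : ℕ) : (0:ℝ) < 2 * n * β + 1 := by
  have : (0:ℝ) ≤ 2 * n * β := by positivity
  linarith

lemma hasDerivAt_cosTerm (β : ℝ) (n : ℕ) {τ : ℝ} (hτ : 0 < τ) :
    HasDerivAt (cosTerm β n) (cosDeriv β n τ) τ := by
  have h := Real.hasDerivAt_rpow_const (x := τ) (p := 2 * n * β) (Or.inl hτ.ne')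
  have h2 := (h.const_mul ((-1:ℝ) ^ n)).div_const (Real.Gamma (2 * n * β + 1))
  refine (congrArg (HasDerivAt (cosTerm β n) · τ) ?_).mpr h2
  unfold cosDeriv
  ring

lemma summable_cosTerm {β : ℝ} (hβ0 : 0 < β) {τ : ℝ} (hτ : 0 ≤ τ) :
    Summable (fun n => cosTerm β n τ) := by
  apply Summable.of_norm
  have hs := summable_pow_div_Gamma (r := τ ^ (2*β)) (Real.rpow_nonneg hτ _)
    (c := 2*β) (by linarith) (d := 1) one_pos
  apply hs.congr
  intro n
  have hΓ : 0 < Real.Gamma (2*β*n + 1) := Real.Gamma_pos_of_pos (by positivity)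
  have he : (τ ^ (2*β)) ^ n = τ ^ (2 * (n:ℝ) * β) := by
    rw [← Real.rpow_natCast (τ ^ (2*β)) n, ← Real.rpow_mul hτ]
    ring_nf
  rw [he, show 2*β*(n:ℝ) + 1 = 2*(n:ℝ)*β + 1 by ring]
  unfold cosTerm
  rw [Real.norm_eq_abs, abs_div, abs_mul, abs_pow, abs_neg, abs_one, one_pow, one_mul,
    abs_of_nonneg (Real.rpow_nonneg hτ _),
    abs_of_pos (Real.Gamma_pos_of_pos (by positivity))]

/-- Uniform summable bound for the derivative series on `Ioo a b`. -/
lemma cosDeriv_bound {β : ℝ} (hβ0 : 0 < β) {a b τ : ℝ} (ha : 0 < a)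
    (hτ : τ ∈ Set.Ioo a b) (n : ℕ) :
    ‖cosDeriv β n τ‖ ≤ 2*β*a⁻¹ * ((n:ℝ) * (b ^ (2*β)) ^ n) / Real.Gamma (2 * n * β + 1) := by
  have hτ0 : 0 < τ := lt_trans ha hτ.1
  have hτb : τ ≤ b := hτ.2.le
  have hb0 : 0 ≤ b := le_trans hτ0.le hτb
  have hΓ : 0 < Real.Gamma (2 * n * β + 1) := Real.Gamma_pos_of_pos (gammaArg_pos hβ0 n)
  have hnorm : ‖cosDeriv β n τ‖ = (2 * n * β) * (τ ^ (2 * (n:ℝ) * β) * τ⁻¹) / Real.Gamma (2 * n * β + 1) := by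
    unfold cosDeriv
    rw [show (2 * (n:ℝ) * β - 1) = 2 * (n:ℝ) * β - 1 from rfl]
    rw [Real.norm_eq_abs, abs_div, abs_mul, abs_mul, abs_pow, abs_neg, abs_one, one_pow, one_mul,
      abs_of_nonneg (Real.rpow_nonneg hτ0.le _), abs_of_nonneg (by positivity : (0:ℝ) ≤ 2 * n * β),
      abs_of_pos hΓ, Real.rpow_sub hτ0, Real.rpow_one]
    ring
  rw [hnorm, show 2*β*a⁻¹ * ((n:ℝ) * (b ^ (2*β)) ^ n) = (2 * (n:ℝ) * β) * ((b ^ (2*β)) ^ n * a⁻¹) by ring]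
  have hpow : τ ^ (2 * (n:ℝ) * β) ≤ (b ^ (2*β)) ^ n := by
    rw [← Real.rpow_natCast (b ^ (2*β)) n, ← Real.rpow_mul hb0,
      show 2*β*(n:ℝ) = 2*(n:ℝ)*β by ring]
    exact Real.rpow_le_rpow hτ0.le hτb (by positivity)
  have hinv : τ⁻¹ ≤ a⁻¹ := by
    apply inv_anti₀ ha hτ.1.le
  gcongr

lemma summable_cosDeriv_bound {β : ℝ} (hβ0 : 0 < β) {a b : ℝ} (ha : 0 < a) (hb : 0 ≤ b) :
    Summable (fun n : ℕ => 2*β*a⁻¹ * ((n:ℝ) * (b ^ (2*β)) ^ n) / Real.Gamma (2 * n * β + 1)) := by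
  have h := (summable_nat_mul_pow_div_Gamma (r := b ^ (2*β)) (Real.rpow_nonneg hb _)
    (c := 2*β) (by linarith) (d := 1) one_pos).mul_left (2*β*a⁻¹)
  apply h.congr
  intro n
  rw [show 2*β*(n:ℝ) + 1 = 2*(n:ℝ)*β + 1 by ring]
  ring

lemma hasDerivAt_fracCos {β : ℝ} (hβ0 : 0 < β) {t : ℝ} (ht : 0 < t) :
    HasDerivAt (fracCos β) (∑' n, cosDeriv β n t) t := by
  set a := t/2 with hadef
  set b := t+1 with hbdef
  have ha : 0 < a := by simp [hadef]; linarith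
  have hb : 0 ≤ b := by simp [hbdef]; linarith
  have hmem : t ∈ Set.Ioo a b := ⟨by simp [hadef]; linarith, by simp [hbdef]⟩
  apply hasDerivAt_of_tendstoUniformlyOn (l := Filter.atTop)
    (f := fun (F : Finset ℕ) τ => ∑ n ∈ F, cosTerm β n τ)
    (f' := fun (F : Finset ℕ) τ => ∑ n ∈ F, cosDeriv β n τ)
    isOpen_Ioo ?_ ?_ ?_ hmem
  · exact tendstoUniformlyOn_tsum (summable_cosDeriv_bound hβ0 ha hb)
      (fun n τ hτ => cosDeriv_bound hβ0 ha hτ n)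
  · apply Filter.Eventually.of_forall
    intro F τ hτ
    exact HasDerivAt.fun_sum (fun n _ => hasDerivAt_cosTerm β n (lt_trans ha hτ.1))
  · intro τ hτ
    exact (summable_cosTerm hβ0 (lt_trans ha hτ.1).le).hasSum

lemma deriv_fracCos {β : ℝ} (hβ0 : 0 < β) {τ : ℝ} (hτ : 0 < τ) :
    deriv (fracCos β) τ = ∑' n, cosDeriv β n τ :=
  (hasDerivAt_fracCos hβ0 hτ).deriv


/-- The integrand of the Caputo integral, term by term. -/
noncomputable def kern (β t : ℝ) (n : ℕ) (τ : ℝ) : ℝ := (t - τ) ^ (-β) * cosDeriv β n τ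

lemma summable_sinAbs {β : ℝ} (hβ0 : 0 < β) {t : ℝ} (ht : 0 < t) :
    Summable (fun n : ℕ => t ^ ((2*(n:ℝ)+1)*β) / Real.Gamma ((2*(n:ℝ)+1)*β + 1)) := by
  have h := (summable_pow_div_Gamma (r := t^(2*β)) (Real.rpow_nonneg ht.le _)
    (c := 2*β) (by linarith) (d := β+1) (by linarith)).mul_left (t^β)
  apply h.congr
  intro n
  have h1 : ((t:ℝ)^(2*β))^n = t^(2*β*(n:ℝ)) := by
    rw [← Real.rpow_natCast (t^(2*β)) n, ← Real.rpow_mul ht.le]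
  rw [h1, show (2*(n:ℝ)+1)*β = 2*β*(n:ℝ) + β by ring,
    show 2*β*(n:ℝ) + β + 1 = 2*β*(n:ℝ) + (β+1) by ring, Real.rpow_add ht]
  ring

lemma kern_fact {β : ℝ} (t : ℝ) (n : ℕ) (τ : ℝ) :
    kern β t (n+1) τ
      = ((-1:ℝ)^(n+1) * (2*((n:ℝ)+1)*β) / Real.Gamma (2*((n:ℝ)+1)*β + 1))
        * ((t-τ) ^ (-β) * τ ^ (2*((n:ℝ)+1)*β - 1)) := by
  unfold kern cosDeriv
  push_cast
  ring

theorem caputo_main {β : ℝ} (hβ0 : 0 < β) (hβ1 : β < 1) {t : ℝ} (ht : 0 < t) :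
    (1 / Real.Gamma (1 - β)) *
        ∫ τ in (0 : ℝ)..t, (t - τ) ^ (-β) * deriv (fracCos β) τ
      = -fracSin β t := by
  have hq : 0 < 1 - β := by linarith
  have hΓq : 0 < Real.Gamma (1-β) := Real.Gamma_pos_of_pos hq
  -- Step A : rewrite as a set integral of a series
  have hstep1 : (∫ τ in (0:ℝ)..t, (t - τ) ^ (-β) * deriv (fracCos β) τ)
      = ∫ τ in Set.Ioc (0:ℝ) t, (∑' n, kern β t n τ) := by
    rw [intervalIntegral.integral_of_le ht.le]
    apply setIntegral_congr_fun measurableSet_Ioc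
    intro τ hτ
    dsimp only
    rw [deriv_fracCos hβ0 hτ.1, ← tsum_mul_left]
    rfl
  -- measurability
  have hmeas : ∀ n, AEStronglyMeasurable (kern β t n) (volume.restrict (Set.Ioc 0 t)) := by
    intro n
    apply Measurable.aestronglyMeasurable
    unfold kern cosDeriv
    fun_prop
  -- integrability of each term
  have hkern0 : ∀ τ : ℝ, kern β t 0 τ = 0 := by
    intro τ
    unfold kern cosDeriv
    norm_num
  have hInt : ∀ n, IntegrableOn (kern β t n) (Set.Ioc 0 t) volume := by
    intro n
    cases n with
    | zero =>
        rw [show kern β t 0 = (fun _ : ℝ => (0:ℝ)) from funext hkern0]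
        exact integrable_zero _ _ _
    | succ n =>
        have hp : 0 < 2*((n:ℝ)+1)*β := by positivity
        have h := (coreIntegrable hβ0 hβ1 hp ht).const_mul
          ((-1:ℝ)^(n+1) * (2*((n:ℝ)+1)*β) / Real.Gamma (2*((n:ℝ)+1)*β + 1))
        exact MeasureTheory.IntegrableOn.congr_fun h
          (fun τ _ => (kern_fact t n τ).symm) measurableSet_Ioc
  -- value of each integral
  have key : ∀ n : ℕ, (∫ τ in Set.Ioc (0:ℝ) t, kern β t (n+1) τ)
      = (-1:ℝ)^(n+1) * Real.Gamma (1-β)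
          * (t ^ ((2*(n:ℝ)+1)*β) / Real.Gamma ((2*(n:ℝ)+1)*β + 1)) := by
    intro n
    have hp : 0 < 2*((n:ℝ)+1)*β := by positivity
    have hΓp : 0 < Real.Gamma (2*((n:ℝ)+1)*β) := Real.Gamma_pos_of_pos hp
    simp_rw [kern_fact t n]
    rw [MeasureTheory.integral_const_mul, coreValue hβ0 hβ1 hp ht,
      Real.Gamma_add_one hp.ne',
      show 2*((n:ℝ)+1)*β + (1-β) = (2*(n:ℝ)+1)*β + 1 by ring,
      show 2*((n:ℝ)+1)*β - β = (2*(n:ℝ)+1)*β by ring]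
    have hΓs : 0 < Real.Gamma ((2*(n:ℝ)+1)*β + 1) := Real.Gamma_pos_of_pos (by positivity)
    field_simp
  -- norms of each integral
  have habs : ∀ n : ℕ, Set.EqOn (fun τ => ‖kern β t (n+1) τ‖)
      (fun τ => ((2*((n:ℝ)+1)*β) / Real.Gamma (2*((n:ℝ)+1)*β + 1))
        * ((t-τ) ^ (-β) * τ ^ (2*((n:ℝ)+1)*β - 1))) (Set.Ioc 0 t) := by
    intro n τ hτ
    have hΓ : 0 < Real.Gamma (2*((n:ℝ)+1)*β + 1) := Real.Gamma_pos_of_pos (by positivity)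
    have h1 : (0:ℝ) ≤ (t-τ) ^ (-β) := Real.rpow_nonneg (by linarith [hτ.2]) _
    have h2 : (0:ℝ) ≤ τ ^ (2*((n:ℝ)+1)*β - 1) := Real.rpow_nonneg hτ.1.le _
    simp only [kern_fact t n]
    rw [norm_mul, Real.norm_eq_abs, Real.norm_eq_abs, abs_div, abs_mul, abs_pow, abs_neg,
      abs_one, one_pow, one_mul, abs_of_nonneg (by positivity : (0:ℝ) ≤ 2*((n:ℝ)+1)*β),
      abs_of_pos hΓ, abs_of_nonneg (mul_nonneg h1 h2)]
  have hU : ∀ n : ℕ, (∫ τ in Set.Ioc (0:ℝ) t, ‖kern β t (n+1) τ‖)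
      = Real.Gamma (1-β) * (t ^ ((2*(n:ℝ)+1)*β) / Real.Gamma ((2*(n:ℝ)+1)*β + 1)) := by
    intro n
    have hp : 0 < 2*((n:ℝ)+1)*β := by positivity
    have hΓp : 0 < Real.Gamma (2*((n:ℝ)+1)*β) := Real.Gamma_pos_of_pos hp
    rw [setIntegral_congr_fun measurableSet_Ioc (habs n)]
    rw [MeasureTheory.integral_const_mul, coreValue hβ0 hβ1 hp ht,
      Real.Gamma_add_one hp.ne',
      show 2*((n:ℝ)+1)*β + (1-β) = (2*(n:ℝ)+1)*β + 1 by ring,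
      show 2*((n:ℝ)+1)*β - β = (2*(n:ℝ)+1)*β by ring]
    have hΓs : 0 < Real.Gamma ((2*(n:ℝ)+1)*β + 1) := Real.Gamma_pos_of_pos (by positivity)
    field_simp
  have hsumnorm : Summable (fun n => ∫ τ in Set.Ioc (0:ℝ) t, ‖kern β t n τ‖) := by
    rw [← summable_nat_add_iff 1]
    exact (((summable_sinAbs hβ0 ht).mul_left (Real.Gamma (1-β))).congr
      (fun n => (hU n).symm))
  have hlint : ∑' n, ∫⁻ τ in Set.Ioc (0:ℝ) t, ‖kern β t n τ‖₊ ≠ ⊤ := by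
    have heq : ∀ n : ℕ, ∫⁻ τ in Set.Ioc (0:ℝ) t, (‖kern β t n τ‖₊ : ENNReal)
        = ENNReal.ofReal (∫ τ in Set.Ioc (0:ℝ) t, ‖kern β t n τ‖) := by
      intro n
      rw [MeasureTheory.ofReal_integral_eq_lintegral_ofReal ((hInt n).norm)
        (Filter.Eventually.of_forall (fun τ => norm_nonneg _))]
      simp only [ofReal_norm, enorm_eq_nnnorm]
    rw [tsum_congr heq,
      ← ENNReal.ofReal_tsum_of_nonneg (fun n => integral_nonneg (fun τ => norm_nonneg _)) hsumnorm]
    exact ENNReal.ofReal_ne_top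
  -- summability of the signed integrals
  have hV : Summable (fun n : ℕ => (-1:ℝ)^(n+1) * Real.Gamma (1-β)
      * (t ^ ((2*(n:ℝ)+1)*β) / Real.Gamma ((2*(n:ℝ)+1)*β + 1))) := by
    apply Summable.of_norm
    apply ((summable_sinAbs hβ0 ht).mul_left (Real.Gamma (1-β))).congr
    intro n
    have hΓs : 0 < Real.Gamma ((2*(n:ℝ)+1)*β + 1) := Real.Gamma_pos_of_pos (by positivity)
    rw [norm_mul, norm_mul, norm_pow, norm_neg, norm_one, one_pow, one_mul,
      Real.norm_eq_abs, Real.norm_eq_abs, abs_of_pos hΓq,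
      abs_of_nonneg (div_nonneg (Real.rpow_nonneg ht.le _) hΓs.le)]
  have hsumW : Summable (fun n => ∫ τ in Set.Ioc (0:ℝ) t, kern β t n τ) := by
    rw [← summable_nat_add_iff 1]
    exact hV.congr (fun n => (key n).symm)
  -- putting it together
  have hW0 : (∫ τ in Set.Ioc (0:ℝ) t, kern β t 0 τ) = 0 := by
    rw [show kern β t 0 = (fun _ : ℝ => (0:ℝ)) from funext hkern0]
    simp
  rw [hstep1, MeasureTheory.integral_tsum hmeas hlint, hsumW.tsum_eq_zero_add, hW0, zero_add]
  rw [tsum_congr key]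
  have hfac : ∀ n : ℕ, (-1:ℝ)^(n+1) * Real.Gamma (1-β)
        * (t ^ ((2*(n:ℝ)+1)*β) / Real.Gamma ((2*(n:ℝ)+1)*β + 1))
      = (-Real.Gamma (1-β)) * ((-1:ℝ)^n * t ^ ((2*(n:ℝ)+1)*β) / Real.Gamma ((2*(n:ℝ)+1)*β + 1)) := by
    intro n
    ring
  rw [tsum_congr hfac, tsum_mul_left]
  have : (∑' n : ℕ, (-1:ℝ)^n * t ^ ((2*(n:ℝ)+1)*β) / Real.Gamma ((2*(n:ℝ)+1)*β + 1))
      = fracSin β t := rfl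
  rw [this]
  field_simp

end CaputoAux

theorem caputo_deriv_fracCos (β : ℝ) (hβ0 : 0 < β) (hβ1 : β < 1) :
    DifferentiableOn ℝ (fracCos β) (Set.Ioi 0) ∧
    ∀ t > (0 : ℝ),
      (1 / Real.Gamma (1 - β)) *
          ∫ τ in (0 : ℝ)..t, (t - τ) ^ (-β) * deriv (fracCos β) τ
        = -fracSin β t := by
  constructor
  · intro τ hτ
    exact (CaputoAux.hasDerivAt_fracCos hβ0 (Set.mem_Ioi.mp hτ)).differentiableAt.differentiableWithinAt
  · intro t ht
    exact CaputoAux.caputo_main hβ0 hβ1 ht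
end

section
/- (Corollary 5.2.) Let 0 < β < 1 and t > 0. Let X be a random variable taking values in (0,∞) whose law has density u ↦ (β/u)·g_β(1;u) with respect to Lebesgue measure on (0,∞) (this is the density of the standard one-sided β-stable law). Then the law of Y = t^β · X^{−β} has density y ↦ g_β(y;t) with respect to Lebesgue measure on (0,∞); that is, the pushforward of the measure with density u ↦ (β/u)·g_β(1;u) under the map u ↦ t^β·u^{−β} is the measure with density y ↦ g_β(y;t). -/
open MeasureTheory

/-- Wright-type density `g_β(x;t)`. -/
noncomputable def gbeta (β x t : ℝ) : ℝ :=
  t ^ (-β) * ∑' k : ℕ, (-x * t ^ (-β)) ^ k / ((k.factorial : ℝ) * Real.Gamma (-β * k + 1 - β))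

/-- One-dimensional change of variables for lintegrals. -/
theorem lintegral_image_eq_lintegral_abs_deriv_mul' {s : Set ℝ} {f : ℝ → ℝ} {f' : ℝ → ℝ}
    (hs : MeasurableSet s) (hf' : ∀ x ∈ s, HasDerivWithinAt f (f' x) s x) (hf : Set.InjOn f s)
    (g : ℝ → ENNReal) :
    ∫⁻ x in f '' s, g x = ∫⁻ x in s, ENNReal.ofReal |f' x| * g (f x) := by
  simpa only [ContinuousLinearMap.det_toSpanSingleton] using
    lintegral_image_eq_lintegral_abs_det_fderiv_mul volume hs
      (fun x hx => (hf' x hx).hasFDerivWithinAt) hf g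

lemma gbeta_key (β t u : ℝ) (hβ0 : 0 < β) (ht : 0 < t) (hu : 0 < u) :
    |t ^ β * (-β * u ^ (-β - 1))| * gbeta β (t ^ β * u ^ (-β)) t = β / u * gbeta β 1 u := by
  have htβ : (0:ℝ) < t ^ β := Real.rpow_pos_of_pos ht β
  have huβ : (0:ℝ) < u ^ (-β - 1) := Real.rpow_pos_of_pos hu _
  have habs : |t ^ β * (-β * u ^ (-β - 1))| = t ^ β * β * u ^ (-β - 1) := by
    rw [abs_mul, abs_mul, abs_neg, abs_of_pos htβ, abs_of_pos hβ0, abs_of_pos huβ, mul_assoc]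
  have harg : -(t ^ β * u ^ (-β)) * t ^ (-β) = -(1:ℝ) * u ^ (-β) := by
    have : t ^ β * t ^ (-β) = 1 := by
      rw [← Real.rpow_add ht]; simp
    calc -(t ^ β * u ^ (-β)) * t ^ (-β) = -((t ^ β * t ^ (-β)) * u ^ (-β)) := by ring
      _ = -(1:ℝ) * u ^ (-β) := by rw [this]; ring
  unfold gbeta
  rw [habs, harg]
  have hsplit : u ^ (-β - 1) = u ^ (-β) * u⁻¹ := by
    rw [← Real.rpow_neg_one u, ← Real.rpow_add hu]; ring_nf
  have htt : t ^ β * t ^ (-β) = 1 := by rw [← Real.rpow_add ht]; simp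
  set S := ∑' k : ℕ, (-(1:ℝ) * u ^ (-β)) ^ k / ((k.factorial : ℝ) * Real.Gamma (-β * k + 1 - β))
  calc t ^ β * β * u ^ (-β - 1) * (t ^ (-β) * S)
      = (t ^ β * t ^ (-β)) * (β * (u ^ (-β) * u⁻¹) * S) := by rw [hsplit]; ring
    _ = β / u * (u ^ (-β) * S) := by rw [htt]; field_simp

theorem pushforward_stable_to_gbeta (β t : ℝ) (hβ0 : 0 < β) (hβ1 : β < 1) (ht : 0 < t) :
    Measure.map (fun u : ℝ => t ^ β * u ^ (-β))
        ((volume.restrict (Set.Ioi (0 : ℝ))).withDensity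
          fun u => ENNReal.ofReal (β / u * gbeta β 1 u))
      = (volume.restrict (Set.Ioi (0 : ℝ))).withDensity
          fun y => ENNReal.ofReal (gbeta β y t) := by
  set φ : ℝ → ℝ := fun u => t ^ β * u ^ (-β) with hφdef
  have hβne : -β ≠ 0 := by linarith
  have hφm : Measurable φ := by fun_prop
  have hanti : StrictAntiOn φ (Set.Ioi 0) := by
    intro a ha b hb hab
    exact mul_lt_mul_of_pos_left
      (Real.strictAntiOn_rpow_Ioi_of_exponent_neg (by linarith) ha hb hab)
      (Real.rpow_pos_of_pos ht β)
  have hinj : Set.InjOn φ (Set.Ioi 0) := hanti.injOn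
  -- surjectivity onto Ioi 0
  have hsurj : ∀ y : ℝ, 0 < y → ∃ u ∈ Set.Ioi (0:ℝ), φ u = y := by
    intro y hy
    refine ⟨t * y ^ (-β⁻¹), mul_pos ht (Real.rpow_pos_of_pos hy _), ?_⟩
    have h1 : (t * y ^ (-β⁻¹)) ^ (-β) = t ^ (-β) * (y ^ (-β⁻¹)) ^ (-β) := by
      rw [Real.mul_rpow ht.le (Real.rpow_pos_of_pos hy _).le]
    have h2 : (y ^ (-β⁻¹)) ^ (-β) = y := by
      rw [← Real.rpow_mul hy.le, show (-β⁻¹) * (-β) = 1 by field_simp, Real.rpow_one]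
    simp only [hφdef, h1, h2]
    rw [← mul_assoc, ← Real.rpow_add ht]
    simp
  ext s hs
  rw [Measure.map_apply hφm hs, withDensity_apply _ (hφm hs), withDensity_apply _ hs,
    Measure.restrict_restrict (hφm hs), Measure.restrict_restrict hs]
  have hA : MeasurableSet (φ ⁻¹' s ∩ Set.Ioi 0) := (hφm hs).inter measurableSet_Ioi
  have himg : φ '' (φ ⁻¹' s ∩ Set.Ioi 0) = s ∩ Set.Ioi 0 := by
    apply Set.Subset.antisymm
    · rintro y ⟨u, ⟨hus, hu⟩, rfl⟩
      exact ⟨hus, mul_pos (Real.rpow_pos_of_pos ht β) (Real.rpow_pos_of_pos hu _)⟩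
    · rintro y ⟨hys, hy⟩
      obtain ⟨u, hu, rfl⟩ := hsurj y hy
      exact ⟨u, ⟨hys, hu⟩, rfl⟩
  have hderiv : ∀ u ∈ φ ⁻¹' s ∩ Set.Ioi 0,
      HasDerivWithinAt φ (t ^ β * (-β * u ^ (-β - 1))) (φ ⁻¹' s ∩ Set.Ioi 0) u := by
    intro u hu
    have : HasDerivAt (fun x : ℝ => x ^ (-β)) (-β * u ^ (-β - 1)) u :=
      Real.hasDerivAt_rpow_const (Or.inl (ne_of_gt hu.2))
    exact ((this.const_mul (t ^ β))).hasDerivWithinAt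
  rw [← himg,
    lintegral_image_eq_lintegral_abs_deriv_mul' hA hderiv
      (hinj.mono (Set.inter_subset_right)) (fun y => ENNReal.ofReal (gbeta β y t))]
  apply setLIntegral_congr_fun hA
  intro u hu
  beta_reduce
  have hu0 : 0 < u := hu.2
  rw [← ENNReal.ofReal_mul (abs_nonneg _), gbeta_key β t u hβ0 ht hu0]
end
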